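/- There exists a continuous 1-periodic function ψ : ℝ → ℝ such that for all N ≥ 1, Σ_{k=1}^{N} s(k) = N^{log₂ 3}·ψ(log₂ N) + s(N)/2, where s is Stern's diatomic sequence. -/

import Mathlib

open Finset Filter Topology

namespace SternPS

variable (s : ℕ → ℕ)

noncomputable def Sf (n : ℕ) : ℝ := ∑ k ∈ Finset.Icc 1 n, (s k : ℝ)

noncomputable def fa (n : ℕ) : ℝ := if n = 0 then 0 else Sf s n - s n / 2

noncomputable def aseq (t : ℝ) (n : ℕ) : ℝ := fa s (⌊t * 2 ^ n⌋).toNat / 3 ^ n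


noncomputable def Phi0 (t : ℝ) : ℝ := ⨆ n, aseq s t n

noncomputable def Phi (t : ℝ) : ℝ := Phi0 s t - Phi0 s (-t)


theorem Sf_succ (n : ℕ) : Sf s (n + 1) = Sf s n + s (n + 1) := by
  rw [Sf, Sf, ← Finset.sum_Icc_succ_top (by omega)]

variable (h1 : s 1 = 1)
    (heven : ∀ n : ℕ, 1 ≤ n → s (2 * n) = s n)
    (hodd : ∀ n : ℕ, 1 ≤ n → s (2 * n + 1) = s n + s (n + 1))

include h1 heven hodd

theorem s_le (n : ℕ) (hn : 1 ≤ n) : s n ≤ n := by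
  induction n using Nat.strong_induction_on with
  | _ n ih =>
    match n, hn with
    | 1, _ => simp [h1]
    | (m+2), _ =>
      rcases Nat.even_or_odd (m+2) with ⟨k, hk⟩ | ⟨k, hk⟩
      · have hk1 : 1 ≤ k := by omega
        have := heven k hk1
        rw [hk, show k + k = 2 * k by ring, this]
        have := ih k (by omega) hk1
        omega
      · have hk1 : 1 ≤ k := by omega
        have := hodd k hk1
        rw [hk, this]
        have h2 := ih k (by omega) hk1
        have h3 := ih (k+1) (by omega) (by omega)
        omega

theorem Sf_double (n : ℕ) (hn : 1 ≤ n) : Sf s (2 * n) + s n = 3 * Sf s n := by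
  induction n with
  | zero => omega
  | succ m ih =>
    rcases Nat.eq_or_lt_of_le hn with h | h
    · have hm0 : m = 0 := by omega
      subst hm0
      have h2 : s 2 = 1 := by have := heven 1 le_rfl; simp at this; omega
      simp only [show 2 * (0 + 1) = 2 by ring, show (0:ℕ) + 1 = 1 by ring]
      simp [Sf, show Finset.Icc 1 2 = {1, 2} by decide, h1, h2]
      norm_num
    · have hm : 1 ≤ m := by omega
      have ihm := ih hm
      have e1 : 2 * (m + 1) = (2 * m + 1) + 1 := by ring
      rw [e1, Sf_succ, Sf_succ, Sf_succ, show 2 * m + 1 + 1 = 2 * (m + 1) by ring,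
        hodd m hm, heven (m+1) (by omega)]
      push_cast
      linarith

theorem fa_double (n : ℕ) : fa s (2 * n) = 3 * fa s n := by
  rcases Nat.eq_zero_or_pos n with h | h
  · simp [h, fa]
  · have := Sf_double s h1 heven hodd n h
    rw [fa, fa, if_neg (by omega), if_neg (by omega), heven n h]
    linarith

omit heven hodd in
theorem fa_one : fa s 1 = 1 / 2 := by
  simp [fa, Sf, h1]
  norm_num

theorem fa_mono : Monotone (fa s) := by
  apply monotone_nat_of_le_succ
  intro n
  rcases Nat.eq_zero_or_pos n with h | h
  · subst h
    rw [show (0:ℕ)+1 = 1 by ring, fa_one s h1]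
    simp [fa]
  · rw [fa, fa, if_neg (by omega), if_neg (by omega), Sf_succ]
    have a1 : (0:ℝ) ≤ s n := by positivity
    have a2 : (0:ℝ) ≤ s (n+1) := by positivity
    linarith

theorem fa_succ_le (n : ℕ) : fa s (n + 1) ≤ fa s n + (n + 1) := by
  rcases Nat.eq_zero_or_pos n with h | h
  · subst h
    rw [show (0:ℕ)+1 = 1 by ring, fa_one s h1]
    simp [fa]
    norm_num
  · rw [fa, fa, if_neg (by omega), if_neg (by omega), Sf_succ]
    have h2 : (s n : ℝ) ≤ n := by exact_mod_cast s_le s h1 heven hodd n h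
    have h3 : (s (n+1) : ℝ) ≤ n + 1 := by exact_mod_cast s_le s h1 heven hodd (n+1) (by omega)
    push_cast
    linarith

theorem fa_pow (k : ℕ) : fa s (2 ^ k) = 3 ^ k / 2 := by
  induction k with
  | zero => simpa using fa_one s h1
  | succ m ih =>
    rw [pow_succ, mul_comm, fa_double s h1 heven hodd, ih, pow_succ]
    ring


theorem fa_pow_mul (k M : ℕ) : fa s (2 ^ k * M) = 3 ^ k * fa s M := by
  induction k with
  | zero => simp
  | succ m ih =>
    rw [pow_succ, mul_comm (2^m) 2, mul_assoc, fa_double s h1 heven hodd, ih, pow_succ]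
    ring

theorem aseq_mono_nat (t : ℝ) : Monotone (aseq s t) := by
  apply monotone_nat_of_le_succ
  intro n
  have key : 2 * (⌊t * 2 ^ n⌋).toNat ≤ (⌊t * 2 ^ (n + 1)⌋).toNat := by
    rcases le_or_gt ⌊t * 2 ^ n⌋ 0 with h | h
    · simp [Int.toNat_of_nonpos h]
    · have h2 : (2 : ℤ) * ⌊t * 2 ^ n⌋ ≤ ⌊t * 2 ^ (n + 1)⌋ := by
        rw [Int.le_floor]
        push_cast
        have e1 := Int.floor_le (t * 2 ^ n)
        have e2 : t * 2 ^ (n + 1) = t * 2 ^ n * 2 := by ring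
        linarith
      omega
  have h3 := fa_mono s h1 heven hodd key
  rw [show 2 * (⌊t * 2 ^ n⌋).toNat = 2 * (⌊t * 2 ^ n⌋).toNat from rfl,
    fa_double s h1 heven hodd] at h3
  rw [aseq, aseq, pow_succ (3:ℝ)]
  rw [div_le_div_iff₀ (by positivity) (by positivity)]
  nlinarith [h3, pow_pos (show (0:ℝ) < 3 by norm_num) n]

theorem aseq_le (t : ℝ) (m n : ℕ) (ht : t ≤ 2 ^ m) : aseq s t n ≤ 3 ^ m / 2 := by
  have key : (⌊t * 2 ^ n⌋).toNat ≤ 2 ^ (m + n) := by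
    have h2 : t * 2 ^ n ≤ ((2 ^ (m + n) : ℕ) : ℝ) := by
      push_cast [pow_add]
      nlinarith [pow_pos (show (0:ℝ) < 2 by norm_num) n]
    have h3 : ⌊t * 2 ^ n⌋ ≤ ((2 ^ (m + n) : ℕ) : ℤ) := by
      calc ⌊t * 2 ^ n⌋ ≤ ⌊((2 ^ (m + n) : ℕ) : ℝ)⌋ := Int.floor_le_floor h2
        _ = _ := Int.floor_natCast _
    exact Int.toNat_le.mpr h3
  have h3 := fa_mono s h1 heven hodd key
  rw [fa_pow s h1 heven hodd] at h3
  rw [aseq, div_le_div_iff₀ (by positivity) (by norm_num), pow_add] at *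
  nlinarith [pow_pos (show (0:ℝ) < 3 by norm_num) n]

theorem aseq_bddAbove (t : ℝ) : BddAbove (Set.range (aseq s t)) := by
  obtain ⟨m, hm⟩ := pow_unbounded_of_one_lt t (show (1:ℝ) < 2 by norm_num)
  exact ⟨3 ^ m / 2, by rintro x ⟨n, rfl⟩; exact aseq_le s h1 heven hodd t m n hm.le⟩


theorem tendsto_aseq (t : ℝ) : Tendsto (aseq s t) atTop (𝓝 (Phi0 s t)) :=
  tendsto_atTop_ciSup (aseq_mono_nat s h1 heven hodd t) (aseq_bddAbove s h1 heven hodd t)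

theorem Phi0_double (t : ℝ) : Phi0 s (2 * t) = 3 * Phi0 s t := by
  have key : ∀ n, aseq s (2 * t) n = 3 * aseq s t (n + 1) := by
    intro n
    rw [aseq, aseq, show 2 * t * 2 ^ n = t * 2 ^ (n + 1) by ring, pow_succ (3:ℝ)]
    field_simp
  have t1 : Tendsto (fun n => aseq s t (n + 1)) atTop (𝓝 (Phi0 s t)) :=
    (tendsto_aseq s h1 heven hodd t).comp (tendsto_add_atTop_nat 1)
  have t2 : Tendsto (aseq s (2 * t)) atTop (𝓝 (3 * Phi0 s t)) := by
    rw [show aseq s (2 * t) = (fun n => 3 * aseq s t (n + 1)) from funext key]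
    exact t1.const_mul 3
  exact tendsto_nhds_unique (tendsto_aseq s h1 heven hodd (2 * t)) t2

theorem Phi0_dyadic (M n : ℕ) : Phi0 s ((M : ℝ) / 2 ^ n) = fa s M / 3 ^ n := by
  have key : ∀ k, aseq s ((M : ℝ) / 2 ^ n) (k + n) = fa s M / 3 ^ n := by
    intro k
    have e1 : (M : ℝ) / 2 ^ n * 2 ^ (k + n) = ((2 ^ k * M : ℕ) : ℝ) := by
      push_cast
      field_simp
      ring
    rw [aseq, e1, Int.floor_natCast, Int.toNat_natCast, fa_pow_mul s h1 heven hodd, pow_add]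
    field_simp
  have t1 : Tendsto (fun k => aseq s ((M : ℝ) / 2 ^ n) (k + n)) atTop
      (𝓝 (Phi0 s ((M : ℝ) / 2 ^ n))) :=
    (tendsto_aseq s h1 heven hodd _).comp (tendsto_add_atTop_nat n)
  have t2 : Tendsto (fun k => aseq s ((M : ℝ) / 2 ^ n) (k + n)) atTop (𝓝 (fa s M / 3 ^ n)) := by
    rw [show (fun k => aseq s ((M : ℝ) / 2 ^ n) (k + n)) = (fun _ => fa s M / 3 ^ n) from
      funext key]
    exact tendsto_const_nhds
  exact tendsto_nhds_unique t1 t2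

theorem Phi0_nat (M : ℕ) : Phi0 s (M : ℝ) = fa s M := by
  have := Phi0_dyadic s h1 heven hodd M 0
  simpa using this

omit h1 heven hodd in
theorem Phi0_nonpos (t : ℝ) (ht : t ≤ 0) : Phi0 s t = 0 := by
  have key : ∀ n, aseq s t n = 0 := by
    intro n
    have h2 : t * 2 ^ n ≤ 0 := mul_nonpos_of_nonpos_of_nonneg ht (by positivity)
    have h3 : ⌊t * 2 ^ n⌋ ≤ 0 := Int.floor_nonpos h2
    rw [aseq, Int.toNat_of_nonpos h3]
    simp [fa]
  rw [Phi0]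
  simp [key]

theorem Phi0_mono : Monotone (Phi0 s) := by
  intro t u htu
  apply ciSup_mono (aseq_bddAbove s h1 heven hodd u)
  intro n
  have h2 : ⌊t * 2 ^ n⌋ ≤ ⌊u * 2 ^ n⌋ :=
    Int.floor_le_floor (by nlinarith [pow_pos (show (0:ℝ) < 2 by norm_num) n])
  have h3 := fa_mono s h1 heven hodd (Int.toNat_le_toNat h2)
  rw [aseq, aseq]
  gcongr


theorem exists_close (y ε : ℝ) (hy : 0 ≤ y) (hε : 0 < ε) :
    ∃ M n : ℕ, |fa s M / 3 ^ n - y| < ε := by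
  obtain ⟨m, hm⟩ : ∃ m : ℕ, y ≤ 3 ^ m / 2 := by
    obtain ⟨m, hm⟩ := pow_unbounded_of_one_lt (2 * y) (show (1:ℝ) < 3 by norm_num)
    exact ⟨m, by linarith⟩
  have hlim : Tendsto (fun n : ℕ => (2:ℝ) ^ m * (2 / 3) ^ n) atTop (𝓝 0) := by
    have := (tendsto_pow_atTop_nhds_zero_of_lt_one (by norm_num : (0:ℝ) ≤ 2/3)
      (by norm_num : (2/3:ℝ) < 1)).const_mul ((2:ℝ) ^ m)
    simpa using this
  obtain ⟨n, hn⟩ := (hlim.eventually (gt_mem_nhds hε)).exists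
  have hbound : ((2:ℝ) ^ (n + m)) < ε * 3 ^ n := by
    have e : (2:ℝ) ^ m * (2 / 3) ^ n = 2 ^ (n + m) / 3 ^ n := by
      rw [div_pow, pow_add]; ring
    rw [e, div_lt_iff₀ (by positivity)] at hn
    linarith
  classical
  have hex : ∃ M, y * 3 ^ n ≤ fa s M := by
    refine ⟨2 ^ (n + m), ?_⟩
    rw [fa_pow s h1 heven hodd, pow_add]
    have h3n : (0:ℝ) < 3 ^ n := by positivity
    calc y * 3 ^ n ≤ 3 ^ m / 2 * 3 ^ n := by nlinarith
      _ = 3 ^ n * 3 ^ m / 2 := by ring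
  have hMP : y * 3 ^ n ≤ fa s (Nat.find hex) := Nat.find_spec hex
  have hMle : Nat.find hex ≤ 2 ^ (n + m) := Nat.find_min' hex (by
    rw [fa_pow s h1 heven hodd, pow_add]
    have h3n : (0:ℝ) < 3 ^ n := by positivity
    calc y * 3 ^ n ≤ 3 ^ m / 2 * 3 ^ n := by nlinarith
      _ = 3 ^ n * 3 ^ m / 2 := by ring)
  rcases Nat.eq_zero_or_pos (Nat.find hex) with h0 | hpos
  · refine ⟨0, n, ?_⟩
    have hfa0 : fa s 0 = 0 := by simp [fa]
    have h3n : (0:ℝ) < 3 ^ n := by positivity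
    rw [h0, hfa0] at hMP
    have hy0 : y = 0 := le_antisymm (by nlinarith) hy
    simpa [hfa0, hy0] using hε
  · obtain ⟨K, hK⟩ : ∃ K, Nat.find hex = K + 1 := ⟨Nat.find hex - 1, by omega⟩
    have hKlt : ¬ (y * 3 ^ n ≤ fa s K) := Nat.find_min hex (by omega)
    push_neg at hKlt
    refine ⟨K + 1, n, ?_⟩
    have hstep := fa_succ_le s h1 heven hodd K
    have h3n : (0:ℝ) < 3 ^ n := by positivity
    rw [hK] at hMP hMle
    have hKcast : ((K:ℝ) + 1) ≤ 2 ^ (n + m) := by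
      have : ((K + 1 : ℕ) : ℝ) ≤ ((2 ^ (n + m) : ℕ) : ℝ) := by exact_mod_cast hMle
      push_cast at this
      linarith
    have habs : 0 ≤ fa s (K + 1) / 3 ^ n - y := by
      rw [sub_nonneg, le_div_iff₀ h3n]
      exact hMP
    rw [abs_of_nonneg habs, sub_lt_iff_lt_add, div_lt_iff₀ h3n]
    -- fa (K+1) < (ε + y) * 3^n
    calc fa s (K + 1) ≤ fa s K + (K + 1) := hstep
      _ < y * 3 ^ n + 2 ^ (n + m) := by linarith
      _ < y * 3 ^ n + ε * 3 ^ n := by linarith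
      _ = (ε + y) * 3 ^ n := by ring

omit h1 heven hodd in
theorem Phi_nonneg_eq (t : ℝ) (ht : 0 ≤ t) : Phi s t = Phi0 s t := by
  rw [Phi, Phi0_nonpos s (-t) (by linarith), sub_zero]

omit h1 heven hodd in
theorem Phi_neg (t : ℝ) : Phi s (-t) = - Phi s t := by
  rw [Phi, Phi, neg_neg]; ring

theorem Phi_mono : Monotone (Phi s) := fun t u h =>
  sub_le_sub (Phi0_mono s h1 heven hodd h) (Phi0_mono s h1 heven hodd (neg_le_neg h))

theorem Phi_double (t : ℝ) : Phi s (2 * t) = 3 * Phi s t := by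
  rw [Phi, Phi, show -(2 * t) = 2 * (-t) by ring, Phi0_double s h1 heven hodd,
    Phi0_double s h1 heven hodd]
  ring

theorem Phi_denseRange : DenseRange (Phi s) := by
  rw [Metric.denseRange_iff]
  intro y r hr
  rcases le_or_gt 0 y with hy | hy
  · obtain ⟨M, n, h⟩ := exists_close s h1 heven hodd y r hy hr
    refine ⟨(M : ℝ) / 2 ^ n, ?_⟩
    rw [Phi_nonneg_eq s _ (by positivity), Phi0_dyadic s h1 heven hodd, Real.dist_eq,
      abs_sub_comm]
    exact h
  · obtain ⟨M, n, h⟩ := exists_close s h1 heven hodd (-y) r (by linarith) hr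
    refine ⟨-((M : ℝ) / 2 ^ n), ?_⟩
    rw [Phi_neg, Phi_nonneg_eq s _ (by positivity), Phi0_dyadic s h1 heven hodd, Real.dist_eq,
      show y - -(fa s M / 3 ^ n) = fa s M / 3 ^ n - -y by ring]
    exact h

theorem Phi_continuous : Continuous (Phi s) :=
  (Phi_mono s h1 heven hodd).continuous_of_denseRange (Phi_denseRange s h1 heven hodd)

theorem main :
    ∃ ψ : ℝ → ℝ, Continuous ψ ∧ Function.Periodic ψ 1 ∧
      ∀ N : ℕ, 1 ≤ N →
        (∑ k ∈ Finset.Icc 1 N, (s k : ℝ))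
          = (N : ℝ) ^ (Real.logb 2 3) * ψ (Real.logb 2 N) + (s N : ℝ) / 2 := by
  refine ⟨fun x => Phi s (Real.exp (Real.log 2 * x)) * Real.exp (-(Real.log 3 * x)),
    ?_, ?_, ?_⟩
  · exact ((Phi_continuous s h1 heven hodd).comp
      (Real.continuous_exp.comp (continuous_const.mul continuous_id))).mul
      (Real.continuous_exp.comp ((continuous_const.mul continuous_id).neg))
  · intro x
    simp only
    rw [show Real.log 2 * (x + 1) = Real.log 2 * x + Real.log 2 by ring, Real.exp_add,
      Real.exp_log (by norm_num : (0:ℝ) < 2),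
      show Real.exp (Real.log 2 * x) * 2 = 2 * Real.exp (Real.log 2 * x) by ring,
      Phi_double s h1 heven hodd,
      show -(Real.log 3 * (x + 1)) = -(Real.log 3 * x) + -Real.log 3 by ring, Real.exp_add,
      show Real.exp (-Real.log 3) = 3⁻¹ by
        rw [Real.exp_neg, Real.exp_log (by norm_num : (0:ℝ) < 3)]]
    ring
  · intro N hN
    have hN0 : (0:ℝ) < N := by exact_mod_cast hN
    have hlog2 : Real.log 2 ≠ 0 := ne_of_gt (Real.log_pos (by norm_num))
    have e1 : Real.exp (Real.log 2 * Real.logb 2 N) = N := by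
      rw [Real.logb, mul_comm, div_mul_cancel₀ _ hlog2, Real.exp_log hN0]
    have e2 : (N : ℝ) ^ Real.logb 2 3 * Real.exp (-(Real.log 3 * Real.logb 2 N)) = 1 := by
      rw [Real.rpow_def_of_pos hN0, ← Real.exp_add, ← Real.exp_zero]
      congr 1
      rw [Real.logb, Real.logb]
      field_simp
      ring
    simp only
    rw [e1, Phi_nonneg_eq s _ hN0.le, Phi0_nat s h1 heven hodd, fa, if_neg (by omega)]
    have hSf : (∑ k ∈ Finset.Icc 1 N, (s k : ℝ)) = Sf s N := rfl
    rw [hSf]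
    linear_combination (-(Sf s N) + (s N : ℝ) / 2) * e2


end SternPS

theorem stern_partial_sums_periodic (s : ℕ → ℕ)
    (h1 : s 1 = 1)
    (heven : ∀ n : ℕ, 1 ≤ n → s (2 * n) = s n)
    (hodd : ∀ n : ℕ, 1 ≤ n → s (2 * n + 1) = s n + s (n + 1)) :
    ∃ ψ : ℝ → ℝ, Continuous ψ ∧ Function.Periodic ψ 1 ∧
      ∀ N : ℕ, 1 ≤ N →
        (∑ k ∈ Finset.Icc 1 N, (s k : ℝ))
          = (N : ℝ) ^ (Real.logb 2 3) * ψ (Real.logb 2 N) + (s N : ℝ) / 2 := by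
  exact SternPS.main s h1 heven hodd
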